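/- In the function field F = K(x, y) with y^9 + x^6 + x^3 = 0 over an algebraically closed field K of characteristic p ≠ 3, the element t = (x^9 - 3x^3 - 1)/(x^3(x^3+1)) satisfies t = x^3 + x^3/y^9 + y^9/x^6. Moreover, if γ is an automorphism of an overfield L ⊇ F fixing t, and γ(x^3) = θ ∈ L satisfies (θ^3 - 3θ - 1)(x^6 + x^3) = (θ^2 + θ)(x^9 - 3x^3 - 1), then θ = x^3, or θ = -(x^3+1)/x^3, or θ = -1/(x^3+1). -/
import Mathlib


/-- In the function field `F = K(x, y)` of the curve
`y⁹ + x⁶ + x³ = 0` over an algebraically closed field `K` of characteristic `≠ 3`,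
the element `t = (x⁹ - 3x³ - 1)/(x³(x³+1))` satisfies `t = x³ + x³/y⁹ + y⁹/x⁶`.
Moreover, if `γ` is an automorphism of an overfield `L ⊇ F` fixing `t`, and
`θ = γ(x³)` satisfies `(θ³ - 3θ - 1)(x⁶ + x³) = (θ² + θ)(x⁹ - 3x³ - 1)` in `L`,
then `θ = x³`, or `θ = -(x³+1)/x³`, or `θ = -1/(x³+1)`. -/
theorem stmt17 {K : Type u} [Field K] [IsAlgClosed K] (hchar : ringChar K ≠ 3)
    {F : Type v} [Field F] [Algebra K F]
    (x y : F) (hrel : y ^ 9 + x ^ 6 + x ^ 3 = 0)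
    (hx : Transcendental K x)
    (hgen : IntermediateField.adjoin K ({x, y} : Set F) = ⊤) :
    (x ^ 9 - 3 * x ^ 3 - 1) / (x ^ 3 * (x ^ 3 + 1)) =
        x ^ 3 + x ^ 3 / y ^ 9 + y ^ 9 / x ^ 6 ∧
    ∀ (L : Type w) [Field L] [Algebra F L] (γ : L ≃+* L),
      γ (algebraMap F L ((x ^ 9 - 3 * x ^ 3 - 1) / (x ^ 3 * (x ^ 3 + 1)))) =
        algebraMap F L ((x ^ 9 - 3 * x ^ 3 - 1) / (x ^ 3 * (x ^ 3 + 1))) →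
      ∀ θ : L, θ = γ (algebraMap F L (x ^ 3)) →
        (θ ^ 3 - 3 * θ - 1) *
            (algebraMap F L x ^ 6 + algebraMap F L x ^ 3) =
          (θ ^ 2 + θ) *
            (algebraMap F L x ^ 9 - 3 * algebraMap F L x ^ 3 - 1) →
        θ = algebraMap F L (x ^ 3) ∨
          θ = -(algebraMap F L (x ^ 3) + 1) / algebraMap F L (x ^ 3) ∨
          θ = -1 / (algebraMap F L (x ^ 3) + 1) := by
  have hx0 : x ≠ 0 := by
    intro h
    exact hx (h ▸ isAlgebraic_zero)
  have h1 : x ^ 3 + 1 ≠ 0 := by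
    intro h
    apply hx
    refine ⟨Polynomial.X ^ 3 + 1, ?_, by simpa using h⟩
    intro hp
    have := congrArg (fun p => Polynomial.coeff p 0) hp
    simp at this
  have hy0 : y ≠ 0 := by
    intro h
    rw [h] at hrel
    have : x ^ 3 * (x ^ 3 + 1) = 0 := by linear_combination hrel
    rcases mul_eq_zero.1 this with h' | h'
    · exact hx0 (pow_eq_zero_iff (by norm_num) |>.1 h')
    · exact h1 h'
  constructor
  · have hy9 : y ^ 9 = -(x ^ 3 * (x ^ 3 + 1)) := by linear_combination hrel
    rw [hy9]
    field_simp
    ring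
  · intro L _ _ γ _ θ _ heq
    set a := algebraMap F L x with ha
    have ha0 : a ≠ 0 := (map_ne_zero (algebraMap F L)).2 hx0
    have hmap : algebraMap F L (x ^ 3) = a ^ 3 := map_pow _ _ _
    have ha1 : a ^ 3 + 1 ≠ 0 := by
      have := (map_ne_zero (algebraMap F L)).2 h1
      rwa [map_add, map_pow, map_one] at this
    have ha3 : a ^ 3 ≠ 0 := pow_ne_zero _ ha0
    have hfact : (θ - a ^ 3) * (θ * a ^ 3 + a ^ 3 + 1) * (θ * a ^ 3 + θ + 1) = 0 := by
      linear_combination heq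
    rcases mul_eq_zero.1 hfact with h | h
    · rcases mul_eq_zero.1 h with h | h
      · left; rw [hmap]; linear_combination h
      · right; left
        rw [hmap, eq_div_iff ha3]
        linear_combination h
    · right; right
      rw [hmap, eq_div_iff ha1]
      linear_combination h
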